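/- Let f₁,…,f_N : [0,1] → [0,1] be increasing homeomorphisms fixing 0 and 1 with all pᵢ > 0, such that for every x ∈ (0,1) there are i, j with fᵢ(x) < x < f_j(x). If μ is a P-invariant probability measure with μ((0,1)) = 1, then μ is atomless. -/

import Mathlib

open Set MeasureTheory

/-- Any invariant probability measure concentrated on `(0,1)` for
such an iterated function system is atomless. -/
theorem stmt6 (N : ℕ) (f : Fin N → ℝ → ℝ) (p : Fin N → ℝ)
    (hmeas : ∀ i, Measurable (f i))
    (hmono : ∀ i, StrictMonoOn (f i) (Icc 0 1))
    (hmaps : ∀ i, MapsTo (f i) (Icc 0 1) (Icc 0 1))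
    (hcont : ∀ i, ContinuousOn (f i) (Icc 0 1))
    (hsurj : ∀ i, SurjOn (f i) (Icc 0 1) (Icc 0 1))
    (h0 : ∀ i, f i 0 = 0) (h1 : ∀ i, f i 1 = 1)
    (hp : ∀ i, 0 < p i) (hp1 : ∑ i, p i = 1)
    (hminmax : ∀ x ∈ Ioo (0:ℝ) 1, (∃ i, f i x < x) ∧ (∃ j, x < f j x))
    (μ : Measure ℝ) (hprob : IsProbabilityMeasure μ)
    (hμ01 : μ (Ioo (0:ℝ) 1) = 1)
    (hinv : (∑ i, ENNReal.ofReal (p i) • Measure.map (f i) μ) = μ) :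
    ∀ a : ℝ, μ {a} = 0 := by
  by_contra hcon
  push_neg at hcon
  obtain ⟨a₀, ha₀⟩ := hcon
  set m := ⨆ x : ℝ, μ {x} with hmdef
  have hm1 : m ≤ 1 := iSup_le fun x => by
    simpa using measure_mono (subset_univ {x}) |>.trans_eq measure_univ
  have hm0 : m ≠ 0 := by
    intro h
    have : μ {a₀} ≤ m := le_iSup (fun x => μ {x}) a₀
    rw [h] at this
    exact ha₀ (nonpos_iff_eq_zero.mp this)
  have hmtop : m ≠ ⊤ := (hm1.trans_lt ENNReal.one_lt_top).ne
  -- the complement of (0,1) is null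
  have hnull : μ (Ioo (0:ℝ) 1)ᶜ = 0 := by
    have := measure_compl (s := Ioo (0:ℝ) 1) measurableSet_Ioo (measure_ne_top μ _)
    rw [hμ01, measure_univ, tsub_self] at this
    exact this
  have hμeq : ∀ s : Set ℝ, μ s = μ (s ∩ Ioo 0 1) := by
    intro s
    have h1' := measure_inter_add_diff (μ := μ) s (measurableSet_Ioo (a := (0:ℝ)) (b := 1))
    have h2' : μ (s \ Ioo 0 1) = 0 :=
      measure_mono_null (diff_subset_compl s (Ioo 0 1)) hnull
    rw [← h1', h2', add_zero]
  -- atoms lie in (0,1)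
  have hatomIoo : ∀ a : ℝ, μ {a} ≠ 0 → a ∈ Ioo (0:ℝ) 1 := by
    intro a h
    by_contra hna
    apply h
    rw [hμeq, Set.singleton_inter_eq_empty.mpr hna, measure_empty]
  -- preimage of a point in (0,1) is (μ-a.e.) a single point in (0,1)
  have hpre : ∀ (i : Fin N), ∀ a ∈ Ioo (0:ℝ) 1,
      ∃ g ∈ Ioo (0:ℝ) 1, f i g = a ∧ μ (f i ⁻¹' {a}) = μ {g} := by
    intro i a ha
    obtain ⟨x, hx, hfx⟩ := hsurj i (Ioo_subset_Icc_self ha)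
    have hx0 : x ≠ 0 := by rintro rfl; rw [h0 i] at hfx; exact ha.1.ne hfx
    have hx1 : x ≠ 1 := by rintro rfl; rw [h1 i] at hfx; exact ha.2.ne hfx.symm
    have hxIoo : x ∈ Ioo (0:ℝ) 1 := ⟨lt_of_le_of_ne hx.1 (Ne.symm hx0), lt_of_le_of_ne hx.2 hx1⟩
    refine ⟨x, hxIoo, hfx, ?_⟩
    rw [hμeq]
    congr 1
    ext y
    simp only [mem_inter_iff, mem_preimage, mem_singleton_iff]
    constructor
    · rintro ⟨hy1, hy2⟩
      exact (hmono i).injOn (Ioo_subset_Icc_self hy2) hx (hy1.trans hfx.symm)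
    · rintro rfl; exact ⟨hfx, hxIoo⟩
  -- invariance evaluated at singletons
  have heval : ∀ a : ℝ, μ {a} = ∑ i, ENNReal.ofReal (p i) * μ (f i ⁻¹' {a}) := by
    intro a
    conv_lhs => rw [← hinv]
    rw [Measure.finset_sum_apply]
    refine Finset.sum_congr rfl fun i _ => ?_
    rw [Measure.smul_apply, smul_eq_mul,
      Measure.map_apply (hmeas i) (measurableSet_singleton a)]
  have hc : ∑ i, ENNReal.ofReal (p i) = 1 := by
    rw [← ENNReal.ofReal_sum_of_nonneg fun i _ => (hp i).le, hp1, ENNReal.ofReal_one]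
  -- existence of a maximal atom
  have hfin : {x : ℝ | m / 2 ≤ μ {x}}.Finite := by
    by_contra hinf
    have hhalf0 : m / 2 ≠ 0 := by
      intro h
      rw [ENNReal.div_eq_zero_iff] at h
      rcases h with h | h
      · exact hm0 h
      · exact ENNReal.ofNat_ne_top h
    have hhalftop : m / 2 ≠ ⊤ := (ENNReal.div_lt_top hmtop two_ne_zero).ne
    have hdivtop : (1 : ENNReal) / (m / 2) ≠ ⊤ := (ENNReal.div_lt_top ENNReal.one_ne_top hhalf0).ne
    obtain ⟨n, hn⟩ := ENNReal.exists_nat_gt hdivtop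
    have hinf' : {x : ℝ | m / 2 ≤ μ {x}}.Infinite := hinf
    obtain ⟨F, hFsub, hFcard⟩ := hinf'.exists_subset_card_eq n
    have hdisj : (F : Set ℝ).PairwiseDisjoint (fun x : ℝ => ({x} : Set ℝ)) := by
      intro x _ y _ hxy
      exact Set.disjoint_singleton.mpr hxy
    have hFmeas : μ (⋃ x ∈ F, ({x} : Set ℝ)) = ∑ x ∈ F, μ {x} :=
      measure_biUnion_finset hdisj fun x _ => measurableSet_singleton x
    have hge : (n : ENNReal) * (m / 2) ≤ μ (⋃ x ∈ F, ({x} : Set ℝ)) := by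
      rw [hFmeas]
      calc (n : ENNReal) * (m / 2) = ∑ _x ∈ F, m / 2 := by
            rw [Finset.sum_const, hFcard, nsmul_eq_mul]
        _ ≤ ∑ x ∈ F, μ {x} := Finset.sum_le_sum fun x hx => hFsub hx
    have hle1 : μ (⋃ x ∈ F, ({x} : Set ℝ)) ≤ 1 := by
      simpa using measure_mono (subset_univ _) |>.trans_eq measure_univ
    have h1lt : (1 : ENNReal) < (n : ENNReal) * (m / 2) :=
      (ENNReal.div_lt_iff (Or.inl hhalf0) (Or.inl hhalftop)).mp hn
    exact absurd (hge.trans hle1) (not_le.mpr h1lt)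
  obtain ⟨b, hb⟩ : ∃ b : ℝ, m / 2 < μ {b} :=
    lt_iSup_iff.mp (ENNReal.half_lt_self hm0 hmtop)
  obtain ⟨a, haA, hamax⟩ := Set.Finite.exists_maximalFor (fun x => μ {x}) _ hfin ⟨b, hb.le⟩
  have ham : μ {a} = m := by
    refine le_antisymm (le_iSup (fun x => μ {x}) a) (iSup_le fun y => ?_)
    rcases le_or_gt (m / 2) (μ {y}) with hy | hy
    · rcases le_or_gt (μ {y}) (μ {a}) with h | h
      · exact h
      · exact (hamax hy h.le).ge
    · exact hy.le.trans haA
  have haIoo : a ∈ Ioo (0:ℝ) 1 := hatomIoo a (ham ▸ hm0)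
  -- key step: an atom of maximal mass has a strictly smaller one below it
  have key : ∀ a' ∈ Ioo (0:ℝ) 1, μ {a'} = m →
      ∃ b' ∈ Ioo (0:ℝ) 1, b' < a' ∧ μ {b'} = m := by
    intro a' ha' ham'
    obtain ⟨-, j, hj⟩ := hminmax a' ha'
    choose g hg hfg hμg using fun i => hpre i a' ha'
    have hle : ∀ i, μ (f i ⁻¹' {a'}) ≤ m := fun i => by
      rw [hμg i]; exact le_iSup (fun x => μ {x}) (g i)
    have hgj : μ {g j} = m := by
      by_contra hne
      have hlt : μ (f j ⁻¹' {a'}) < m := by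
        rw [hμg j]
        exact lt_of_le_of_ne (le_iSup (fun x => μ {x}) (g j)) hne
      have hcj0 : ENNReal.ofReal (p j) ≠ 0 := by
        simp [ENNReal.ofReal_eq_zero, not_le, hp j]
      have herase_ne_top : ∑ i ∈ Finset.univ.erase j, ENNReal.ofReal (p i) * m ≠ ⊤ := by
        refine (ENNReal.sum_lt_top.mpr fun i _ => ?_).ne
        exact ENNReal.mul_lt_top ENNReal.ofReal_lt_top hmtop.lt_top
      have hstep : μ {a'} < m := by
        rw [heval a']
        calc ∑ i, ENNReal.ofReal (p i) * μ (f i ⁻¹' {a'})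
            = ENNReal.ofReal (p j) * μ (f j ⁻¹' {a'}) +
              ∑ i ∈ Finset.univ.erase j, ENNReal.ofReal (p i) * μ (f i ⁻¹' {a'}) :=
              (Finset.add_sum_erase _ _ (Finset.mem_univ j)).symm
          _ ≤ ENNReal.ofReal (p j) * μ (f j ⁻¹' {a'}) +
              ∑ i ∈ Finset.univ.erase j, ENNReal.ofReal (p i) * m := by
              refine add_le_add_right (Finset.sum_le_sum fun i _ => ?_) _
              exact mul_le_mul_right (hle i) _
          _ < ENNReal.ofReal (p j) * m +
              ∑ i ∈ Finset.univ.erase j, ENNReal.ofReal (p i) * m := by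
              refine ENNReal.add_lt_add_right herase_ne_top ?_
              exact ENNReal.mul_lt_mul_right hcj0 ENNReal.ofReal_ne_top hlt
          _ = ∑ i, ENNReal.ofReal (p i) * m :=
              Finset.add_sum_erase _ (fun i => ENNReal.ofReal (p i) * m) (Finset.mem_univ j)
          _ = (∑ i, ENNReal.ofReal (p i)) * m := (Finset.sum_mul _ _ _).symm
          _ = m := by rw [hc, one_mul]
      rw [ham'] at hstep
      exact lt_irrefl m hstep
    have hlt' : g j < a' := by
      by_contra hge
      push_neg at hge
      have := (hmono j).monotoneOn (Ioo_subset_Icc_self ha') (Ioo_subset_Icc_self (hg j)) hge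
      rw [hfg j] at this
      exact absurd hj (not_lt.mpr this)
    exact ⟨g j, hg j, hlt', hgj⟩
  -- build an infinite strictly decreasing sequence of atoms of mass m
  have step : ∀ x : {x : ℝ // x ∈ Ioo (0:ℝ) 1 ∧ μ {x} = m},
      ∃ y : {x : ℝ // x ∈ Ioo (0:ℝ) 1 ∧ μ {x} = m}, y.1 < x.1 := by
    rintro ⟨x, hx, hxm⟩
    obtain ⟨b', hb', hba, hbm⟩ := key x hx hxm
    exact ⟨⟨b', hb', hbm⟩, hba⟩
  let seq : ℕ → {x : ℝ // x ∈ Ioo (0:ℝ) 1 ∧ μ {x} = m} := fun n =>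
    Nat.rec ⟨a, haIoo, ham⟩ (fun _ x => (step x).choose) n
  have hsucc : ∀ n, (seq (n + 1)).1 < (seq n).1 := fun n => (step (seq n)).choose_spec
  have hanti : StrictAnti fun n => (seq n).1 := strictAnti_nat_of_succ_lt hsucc
  have hinj : Function.Injective fun n => (seq n).1 := hanti.injective
  have hdisj : Pairwise (Function.onFun Disjoint fun n => ({(seq n).1} : Set ℝ)) := by
    intro i j hij
    exact Set.disjoint_singleton.mpr fun h => hij (hinj h)
  have hU : μ (⋃ n, ({(seq n).1} : Set ℝ)) = ∑' n : ℕ, μ {(seq n).1} :=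
    measure_iUnion hdisj fun n => measurableSet_singleton _
  have htop : μ (⋃ n, ({(seq n).1} : Set ℝ)) = ⊤ := by
    rw [hU]
    have : ∀ n : ℕ, μ {(seq n).1} = m := fun n => (seq n).2.2
    simp only [this]
    exact ENNReal.tsum_const_eq_top_of_ne_zero hm0
  have hle1 : μ (⋃ n, ({(seq n).1} : Set ℝ)) ≤ 1 := by
    simpa using measure_mono (subset_univ _) |>.trans_eq measure_univ
  rw [htop] at hle1
  exact absurd hle1 (by simp)
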